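/- Define w₁(v,m) = √((m² + v²)³) − v³ + 3vm² on the set {(v,m) : v ∈ ℝ, m > 0}. Then w₁ is differentiable there and satisfies the first-order PDE (v + √(m² + v²)) ∂_v w₁(v,m) − m ∂_m w₁(v,m) = 0 for all v ∈ ℝ, m > 0; equivalently, ∇w₁(v,m) is orthogonal to r₂(v,m) = (v + √(v²+m²), −m), so w₁ is a Riemann invariant of the system of conservation laws with flux F(v,m) = (v²/2 − m²/2, −vm). -/

import Mathlib

lemma sqrt_cube (a : ℝ) (ha : 0 ≤ a) : Real.sqrt (a ^ 3) = a * Real.sqrt a := by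
  rw [pow_succ, Real.sqrt_mul (by positivity), Real.sqrt_sq ha]

lemma sqrt_part_deriv (m v : ℝ) (hc : 0 < m ^ 2 + v ^ 2) :
    HasDerivAt (fun x : ℝ => Real.sqrt ((m ^ 2 + x ^ 2) ^ 3))
      (3 * v * Real.sqrt (m ^ 2 + v ^ 2)) v := by
  have hs : 0 < Real.sqrt (m ^ 2 + v ^ 2) := Real.sqrt_pos.mpr hc
  have h1 : HasDerivAt (fun x : ℝ => m ^ 2 + x ^ 2) (2 * v) v := by
    simpa using (hasDerivAt_pow 2 v).const_add (m ^ 2)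
  have h2 := h1.mul (h1.sqrt hc.ne')
  have heq : (fun x : ℝ => Real.sqrt ((m ^ 2 + x ^ 2) ^ 3))
      = fun x : ℝ => (m ^ 2 + x ^ 2) * Real.sqrt (m ^ 2 + x ^ 2) := by
    funext x; exact sqrt_cube _ (by positivity)
  rw [heq]
  refine h2.congr_deriv ?_
  have hss : Real.sqrt (m ^ 2 + v ^ 2) * Real.sqrt (m ^ 2 + v ^ 2) = m ^ 2 + v ^ 2 :=
    Real.mul_self_sqrt hc.le
  field_simp
  linear_combination -v * hss

theorem riemann_invariant_w1 :
    let w₁ : ℝ → ℝ → ℝ := fun v m =>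
      Real.sqrt ((m ^ 2 + v ^ 2) ^ 3) - v ^ 3 + 3 * v * m ^ 2
    ∀ v m : ℝ, 0 < m →
      DifferentiableAt ℝ (fun p : ℝ × ℝ => w₁ p.1 p.2) (v, m) ∧
      (v + Real.sqrt (m ^ 2 + v ^ 2)) * deriv (fun x : ℝ => w₁ x m) v -
          m * deriv (fun y : ℝ => w₁ v y) m = 0 ∧
      deriv (fun x : ℝ => w₁ x m) v * (v + Real.sqrt (v ^ 2 + m ^ 2)) +
          deriv (fun y : ℝ => w₁ v y) m * (-m) = 0 := by
  intro w₁ v m hm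
  have hc : 0 < m ^ 2 + v ^ 2 := by positivity
  set s := Real.sqrt (m ^ 2 + v ^ 2) with hsdef
  have hss : s * s = m ^ 2 + v ^ 2 := Real.mul_self_sqrt hc.le
  -- partial derivative in v
  have hdv : HasDerivAt (fun x : ℝ => w₁ x m) (3 * v * s - 3 * v ^ 2 + 3 * m ^ 2) v := by
    have h3 : HasDerivAt (fun x : ℝ => 3 * x * m ^ 2) (3 * m ^ 2) v := by
      simpa using ((hasDerivAt_id v).const_mul (3:ℝ)).mul_const (m ^ 2)
    have := ((sqrt_part_deriv m v hc).sub (hasDerivAt_pow 3 v)).add h3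
    exact this.congr_deriv (by ring)
  -- partial derivative in m
  have hdm : HasDerivAt (fun y : ℝ => w₁ v y) (3 * m * s + 6 * v * m) m := by
    have hsw : HasDerivAt (fun y : ℝ => Real.sqrt ((y ^ 2 + v ^ 2) ^ 3)) (3 * m * s) m := by
      have h := sqrt_part_deriv v m (by positivity)
      have heq : (fun y : ℝ => Real.sqrt ((y ^ 2 + v ^ 2) ^ 3))
          = fun y : ℝ => Real.sqrt ((v ^ 2 + y ^ 2) ^ 3) := by
        funext y; ring_nf
      rw [heq, hsdef]
      convert h using 2 <;> ring
    have h3 : HasDerivAt (fun y : ℝ => 3 * v * y ^ 2) (6 * v * m) m := by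
      have := (hasDerivAt_pow 2 m).const_mul (3 * v)
      simpa using this.congr_deriv (by ring)
    have := (hsw.sub_const (v ^ 3)).add h3
    exact this
  have e1 : deriv (fun x : ℝ => w₁ x m) v = 3 * v * s - 3 * v ^ 2 + 3 * m ^ 2 := hdv.deriv
  have e2 : deriv (fun y : ℝ => w₁ v y) m = 3 * m * s + 6 * v * m := hdm.deriv
  refine ⟨?_, ?_, ?_⟩
  · have hf : DifferentiableAt ℝ (fun p : ℝ × ℝ => ((p.2 ^ 2 + p.1 ^ 2) ^ 3)) (v, m) := by
      fun_prop
    have hsq : DifferentiableAt ℝ (fun p : ℝ × ℝ => Real.sqrt ((p.2 ^ 2 + p.1 ^ 2) ^ 3)) (v, m) :=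
      hf.sqrt (by simp; positivity)
    have : DifferentiableAt ℝ
        (fun p : ℝ × ℝ => Real.sqrt ((p.2 ^ 2 + p.1 ^ 2) ^ 3) - p.1 ^ 3 + 3 * p.1 * p.2 ^ 2)
        (v, m) := by
      apply DifferentiableAt.add
      apply hsq.sub
      all_goals fun_prop
    exact this
  · rw [e1, e2]; linear_combination 3 * v * hss
  · rw [e1, e2]
    have : Real.sqrt (v ^ 2 + m ^ 2) = s := by rw [hsdef]; ring_nf
    rw [this]; linear_combination 3 * v * hss
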